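/- arXiv:1102.0942 — 2 statements merged into one kernel-verified Lean document; each statement's English description precedes it below -/
import Mathlib

section
/- Let ‖·‖†_ρ denote the weighted L¹-Fourier norm ‖ℱ‖†_ρ = max_{ℏ∈[0,1]} ∫ |ℱ̂(t;ℏ)| e^{ρ|t|} dλ(t) on symbols over ℝ^l × 𝕋^l. If ℱ, 𝒢 have finite norms with ‖ℱ‖†_ρ, ‖𝒢‖†_{ρ−d} < ∞ and 0 < d + d₁ < ρ, then the Moyal bracket satisfies ‖{ℱ,𝒢}_M‖†_{ρ−d−d₁} ≤ (1/(e² d₁ (d+d₁))) · ‖ℱ‖†_ρ · ‖𝒢‖†_{ρ−d}. -/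
open MeasureTheory

noncomputable section

/-- The measure `dλ(p,s) = dp ⊗ ∑_{q∈ℤ^l} δ_q(s)` on `ℝ × ℝ^l` carrying the
Fourier data of symbols on `ℝ^l × 𝕋^l` (in the `ω`-restricted calculus). -/
def fourierMeasure (l : ℕ) : Measure (ℝ × (Fin l → ℝ)) :=
  (volume : Measure ℝ).prod
    (Measure.sum fun q : Fin l → ℤ => Measure.dirac fun i => (q i : ℝ))

/-- `|t| = |p| + |s|` for `t = (p,s) ∈ ℝ × ℝ^l`. -/
def tAbs (l : ℕ) (t : ℝ × (Fin l → ℝ)) : ℝ :=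
  |t.1| + Real.sqrt (∑ i, t.2 i ^ 2)

/-- Twisted symplectic pairing `Ω_ω(t,t') = ⟨p·ω,s'⟩ - ⟨s,p'·ω⟩`. -/
def OmegaPair (l : ℕ) (ω : Fin l → ℝ) (t t' : ℝ × (Fin l → ℝ)) : ℝ :=
  t.1 * (∑ i, ω i * t'.2 i) - (∑ i, t.2 i * ω i) * t'.1

/-- Weighted `L¹`-Fourier norm `‖F‖†_σ = ∫ |F(t)| e^{σ|t|} dλ(t)`. -/
def wNorm (l : ℕ) (σ : ℝ) (F : ℝ × (Fin l → ℝ) → ℂ) : ℝ :=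
  ∫ t, ‖F t‖ * Real.exp (σ * tAbs l t) ∂(fourierMeasure l)

/-- Fourier data of the Moyal bracket `{ℱ,𝒢}_M`:
`(1/ℏ) ∫ F(t'-t) G(t') sin(ℏ Ω_ω(t'-t,t')/2) dλ(t')`. -/
def moyalData (l : ℕ) (ω : Fin l → ℝ) (ℏ : ℝ) (F G : ℝ × (Fin l → ℝ) → ℂ) :
    ℝ × (Fin l → ℝ) → ℂ := fun t =>
  (1 / ℏ : ℝ) • ∫ t', F (t' - t) * G t' *
    (Real.sin (ℏ * OmegaPair l ω (t' - t) t' / 2) : ℝ) ∂(fourierMeasure l)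

open scoped ENNReal

namespace MoyalAux

/-- The second factor measure: sum of Dirac masses at integer points. -/
def nu (l : ℕ) : Measure (Fin l → ℝ) :=
  Measure.sum fun q : Fin l → ℤ => Measure.dirac fun i => (q i : ℝ)

lemma fourierMeasure_def (l : ℕ) : fourierMeasure l = (volume : Measure ℝ).prod (nu l) := rfl

instance (l : ℕ) : SFinite (nu l) := by unfold nu; infer_instance

instance (l : ℕ) : SFinite (fourierMeasure l) := by
  rw [fourierMeasure_def]; infer_instance

/-! ### Properties of `tAbs` -/

lemma sqrt_sum_sq_eq_norm {l : ℕ} (s : Fin l → ℝ) :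
    Real.sqrt (∑ i, s i ^ 2) = ‖(WithLp.equiv 2 (Fin l → ℝ)).symm s‖ := by
  simp [EuclideanSpace.norm_eq, Real.norm_eq_abs, sq_abs]

lemma tAbs_nonneg (l : ℕ) (t : ℝ × (Fin l → ℝ)) : 0 ≤ tAbs l t :=
  add_nonneg (abs_nonneg _) (Real.sqrt_nonneg _)

lemma tAbs_add_le (l : ℕ) (x y : ℝ × (Fin l → ℝ)) :
    tAbs l (x + y) ≤ tAbs l x + tAbs l y := by
  unfold tAbs
  have h1 : |(x + y).1| ≤ |x.1| + |y.1| := abs_add_le _ _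
  have h2 : Real.sqrt (∑ i, (x + y).2 i ^ 2) ≤
      Real.sqrt (∑ i, x.2 i ^ 2) + Real.sqrt (∑ i, y.2 i ^ 2) := by
    rw [sqrt_sum_sq_eq_norm, sqrt_sum_sq_eq_norm, sqrt_sum_sq_eq_norm]
    exact norm_add_le ((WithLp.equiv 2 (Fin l → ℝ)).symm x.2)
      ((WithLp.equiv 2 (Fin l → ℝ)).symm y.2)
  linarith

lemma tAbs_neg (l : ℕ) (x : ℝ × (Fin l → ℝ)) : tAbs l (-x) = tAbs l x := by
  simp [tAbs, Prod.fst_neg, Prod.snd_neg, abs_neg, neg_sq]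

lemma tAbs_triangle (l : ℕ) (t t' : ℝ × (Fin l → ℝ)) :
    tAbs l t ≤ tAbs l (t' - t) + tAbs l t' := by
  have h : t' + -(t' - t) = t := by abel
  have h2 := tAbs_add_le l t' (-(t' - t))
  rw [h, tAbs_neg] at h2
  linarith

lemma continuous_tAbs (l : ℕ) : Continuous (tAbs l) := by
  have h2 : Continuous fun t : ℝ × (Fin l → ℝ) => ∑ i, t.2 i ^ 2 :=
    continuous_finset_sum _ fun i _ => ((continuous_apply i).comp continuous_snd).pow 2
  exact (continuous_fst.abs).add (Real.continuous_sqrt.comp h2)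

/-! ### Bound on the symplectic pairing -/

lemma abs_dot_le {l : ℕ} {ω : Fin l → ℝ} (hω : (∑ i, |ω i|) ≤ 1) (s : Fin l → ℝ) :
    |∑ i, ω i * s i| ≤ Real.sqrt (∑ i, s i ^ 2) := by
  set B := Real.sqrt (∑ i, s i ^ 2) with hB
  have hBnn : 0 ≤ B := Real.sqrt_nonneg _
  have hle : ∀ i, |s i| ≤ B := fun i => by
    rw [hB, ← Real.sqrt_sq_eq_abs]
    exact Real.sqrt_le_sqrt
      (Finset.single_le_sum (fun j _ => sq_nonneg (s j)) (Finset.mem_univ i))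
  calc |∑ i, ω i * s i| ≤ ∑ i, |ω i * s i| := Finset.abs_sum_le_sum_abs _ _
    _ ≤ ∑ i, |ω i| * B := by
        refine Finset.sum_le_sum fun i _ => ?_
        rw [abs_mul]
        exact mul_le_mul_of_nonneg_left (hle i) (abs_nonneg _)
    _ = (∑ i, |ω i|) * B := by rw [Finset.sum_mul]
    _ ≤ 1 * B := mul_le_mul_of_nonneg_right hω hBnn
    _ = B := one_mul B

lemma omega_bound {l : ℕ} {ω : Fin l → ℝ} (hω : (∑ i, |ω i|) ≤ 1)
    (a b : ℝ × (Fin l → ℝ)) :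
    |OmegaPair l ω a b| ≤ tAbs l a * tAbs l b := by
  unfold OmegaPair tAbs
  have h1 : |∑ i, ω i * b.2 i| ≤ Real.sqrt (∑ i, b.2 i ^ 2) := abs_dot_le hω b.2
  have h2 : |∑ i, a.2 i * ω i| ≤ Real.sqrt (∑ i, a.2 i ^ 2) := by
    have : (∑ i, a.2 i * ω i) = ∑ i, ω i * a.2 i := by
      refine Finset.sum_congr rfl fun i _ => mul_comm _ _
    rw [this]; exact abs_dot_le hω a.2
  have h3 : |a.1 * (∑ i, ω i * b.2 i) - (∑ i, a.2 i * ω i) * b.1| ≤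
      |a.1| * |∑ i, ω i * b.2 i| + |∑ i, a.2 i * ω i| * |b.1| := by
    calc _ ≤ |a.1 * (∑ i, ω i * b.2 i)| + |(∑ i, a.2 i * ω i) * b.1| := abs_sub _ _
      _ = |a.1| * |∑ i, ω i * b.2 i| + |∑ i, a.2 i * ω i| * |b.1| := by
          rw [abs_mul, abs_mul]
  have ha1 : (0:ℝ) ≤ |a.1| := abs_nonneg _
  have hb1 : (0:ℝ) ≤ |b.1| := abs_nonneg _
  have ha2 : (0:ℝ) ≤ Real.sqrt (∑ i, a.2 i ^ 2) := Real.sqrt_nonneg _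
  have hb2 : (0:ℝ) ≤ Real.sqrt (∑ i, b.2 i ^ 2) := Real.sqrt_nonneg _
  have h4 : (0:ℝ) ≤ |∑ i, a.2 i * ω i| := abs_nonneg _
  have h5 : (0:ℝ) ≤ |∑ i, ω i * b.2 i| := abs_nonneg _
  nlinarith [mul_le_mul_of_nonneg_left h1 ha1, mul_le_mul_of_nonneg_right h2 hb1]

/-! ### Elementary scalar bounds -/

lemma mul_exp_neg_le {δ x : ℝ} (hδ : 0 < δ) (hx : 0 ≤ x) :
    x * Real.exp (-(δ * x)) ≤ 1 / (Real.exp 1 * δ) := by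
  have key : δ * x * Real.exp (-(δ * x)) ≤ Real.exp (-1) := by
    have h1 : δ * x ≤ Real.exp (δ * x - 1) := by
      have := Real.add_one_le_exp (δ * x - 1); linarith
    calc δ * x * Real.exp (-(δ * x))
        ≤ Real.exp (δ * x - 1) * Real.exp (-(δ * x)) :=
          mul_le_mul_of_nonneg_right h1 (Real.exp_pos _).le
      _ = Real.exp (-1) := by rw [← Real.exp_add]; congr 1; ring
  have h3 : x * Real.exp (-(δ * x)) = (δ * x * Real.exp (-(δ * x))) / δ := by
    field_simp
  rw [h3]
  have h4 : (δ * x * Real.exp (-(δ * x))) / δ ≤ Real.exp (-1) / δ := by gcongr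
  refine h4.trans_eq ?_
  rw [Real.exp_neg, div_eq_mul_inv, div_eq_mul_inv, one_mul, mul_inv]

lemma key_real_ineq {l : ℕ} {ω : Fin l → ℝ} (hω : (∑ i, |ω i|) ≤ 1)
    {ℏ : ℝ} (hℏ0 : 0 < ℏ) {ρ d d₁ : ℝ} (hd : 0 < d) (hd₁ : 0 < d₁)
    (a b : ℝ × (Fin l → ℝ)) :
    1 / ℏ * Real.exp ((ρ - d - d₁) * (tAbs l a + tAbs l b)) *
      |Real.sin (ℏ * OmegaPair l ω a b / 2)| ≤
    1 / (Real.exp 1 ^ 2 * d₁ * (d + d₁)) * Real.exp (ρ * tAbs l a) *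
      Real.exp ((ρ - d) * tAbs l b) := by
  have hA : 0 ≤ tAbs l a := tAbs_nonneg l a
  have hB : 0 ≤ tAbs l b := tAbs_nonneg l b
  set A := tAbs l a
  set B := tAbs l b
  have hdd₁ : 0 < d + d₁ := by linarith
  have hsin : 1 / ℏ * |Real.sin (ℏ * OmegaPair l ω a b / 2)| ≤ A * B := by
    have h1 : |Real.sin (ℏ * OmegaPair l ω a b / 2)| ≤ |ℏ * OmegaPair l ω a b / 2| :=
      Real.abs_sin_le_abs
    have h2 : |ℏ * OmegaPair l ω a b / 2| = ℏ * |OmegaPair l ω a b| / 2 := by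
      rw [abs_div, abs_mul, abs_of_pos hℏ0]; norm_num
    have h3 := omega_bound hω a b
    have hAB : (0:ℝ) ≤ A * B := mul_nonneg hA hB
    calc 1 / ℏ * |Real.sin (ℏ * OmegaPair l ω a b / 2)|
        ≤ 1 / ℏ * (ℏ * |OmegaPair l ω a b| / 2) := by
          exact mul_le_mul_of_nonneg_left (h1.trans_eq h2) (by positivity)
      _ = |OmegaPair l ω a b| / 2 := by field_simp
      _ ≤ A * B / 2 := by linarith
      _ ≤ A * B := by linarith
  have h1 : A * Real.exp (-((d + d₁) * A)) ≤ 1 / (Real.exp 1 * (d + d₁)) :=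
    mul_exp_neg_le hdd₁ hA
  have h2 : B * Real.exp (-(d₁ * B)) ≤ 1 / (Real.exp 1 * d₁) :=
    mul_exp_neg_le hd₁ hB
  have hexp : Real.exp ((ρ - d - d₁) * (A + B)) =
      Real.exp (ρ * A) * Real.exp (-((d + d₁) * A)) *
        (Real.exp ((ρ - d) * B) * Real.exp (-(d₁ * B))) := by
    rw [← Real.exp_add, ← Real.exp_add, ← Real.exp_add]; congr 1; ring
  have hfac : (1 / (Real.exp 1 * (d + d₁))) * (1 / (Real.exp 1 * d₁)) =
      1 / (Real.exp 1 ^ 2 * d₁ * (d + d₁)) := by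
    rw [div_mul_div_comm, one_mul]; congr 1; ring
  have hx1 : (0:ℝ) ≤ B * Real.exp (-(d₁ * B)) := mul_nonneg hB (Real.exp_pos _).le
  have hx2 : (0:ℝ) ≤ 1 / (Real.exp 1 * (d + d₁)) :=
    le_of_lt (one_div_pos.mpr (mul_pos (Real.exp_pos 1) hdd₁))
  calc 1 / ℏ * Real.exp ((ρ - d - d₁) * (A + B)) * |Real.sin (ℏ * OmegaPair l ω a b / 2)|
      = Real.exp ((ρ - d - d₁) * (A + B)) *
          (1 / ℏ * |Real.sin (ℏ * OmegaPair l ω a b / 2)|) := by ring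
    _ ≤ Real.exp ((ρ - d - d₁) * (A + B)) * (A * B) :=
        mul_le_mul_of_nonneg_left hsin (Real.exp_pos _).le
    _ = (A * Real.exp (-((d + d₁) * A))) * (B * Real.exp (-(d₁ * B))) *
          (Real.exp (ρ * A) * Real.exp ((ρ - d) * B)) := by rw [hexp]; ring
    _ ≤ (1 / (Real.exp 1 * (d + d₁))) * (1 / (Real.exp 1 * d₁)) *
          (Real.exp (ρ * A) * Real.exp ((ρ - d) * B)) := by
        refine mul_le_mul_of_nonneg_right ?_ (by positivity)
        exact mul_le_mul h1 h2 hx1 hx2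
    _ = 1 / (Real.exp 1 ^ 2 * d₁ * (d + d₁)) * Real.exp (ρ * A) *
          Real.exp ((ρ - d) * B) := by rw [hfac]; ring

/-! ### Translation invariance of the Fourier measure -/

/-- The set of integer points of `ℝ^l`. -/
def intSet (l : ℕ) : Set (Fin l → ℝ) :=
  Set.range fun m : Fin l → ℤ => fun i => (m i : ℝ)

lemma measurableSet_intSet (l : ℕ) : MeasurableSet (intSet l) :=
  (Set.countable_range _).measurableSet

lemma nu_compl_intSet (l : ℕ) : nu l (intSet l)ᶜ = 0 := by
  rw [nu, Measure.sum_apply _ (measurableSet_intSet l).compl]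
  refine ENNReal.tsum_eq_zero.mpr fun q => ?_
  rw [Measure.dirac_apply' _ (measurableSet_intSet l).compl]
  exact Set.indicator_of_notMem (by simp [intSet]) 1

lemma ae_snd_int (l : ℕ) : ∀ᵐ t ∂fourierMeasure l, t.2 ∈ intSet l := by
  rw [ae_iff]
  have h : {t : ℝ × (Fin l → ℝ) | ¬ t.2 ∈ intSet l} = Set.univ ×ˢ (intSet l)ᶜ := by
    ext t; simp [Set.mem_prod]
  rw [fourierMeasure_def, h, Measure.prod_prod, nu_compl_intSet, mul_zero]

lemma map_nu_eq {l : ℕ} (f : (Fin l → ℝ) → Fin l → ℝ) (hf : Measurable f)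
    (β : (Fin l → ℤ) ≃ (Fin l → ℤ))
    (hcomm : ∀ q : Fin l → ℤ, f (fun i => (q i : ℝ)) = fun i => ((β q) i : ℝ)) :
    Measure.map f (nu l) = nu l := by
  ext A hA
  rw [Measure.map_apply hf hA, nu, Measure.sum_apply _ (hf hA), Measure.sum_apply _ hA,
    ← Equiv.tsum_eq β fun q : Fin l → ℤ => Measure.dirac (fun i => (q i : ℝ)) A]
  refine tsum_congr fun q => ?_
  rw [← hcomm q, ← Measure.map_dirac' hf, Measure.map_apply hf hA]

lemma mp_sub_left {l : ℕ} {c : ℝ × (Fin l → ℝ)} (hc : c.2 ∈ intSet l) :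
    MeasurePreserving (fun t => c - t) (fourierMeasure l) (fourierMeasure l) := by
  obtain ⟨m, hm⟩ := hc
  have h1 : MeasurePreserving (fun p : ℝ => c.1 - p) volume volume :=
    Measure.measurePreserving_sub_left volume c.1
  have hmeas : Measurable fun s : Fin l → ℝ => c.2 - s := measurable_const.sub measurable_id
  have h2 : MeasurePreserving (fun s : Fin l → ℝ => c.2 - s) (nu l) (nu l) := by
    refine ⟨hmeas, ?_⟩
    rw [← hm] at hmeas ⊢
    exact map_nu_eq _ hmeas (Equiv.subLeft m) fun q => by
      funext i; simp [Equiv.subLeft]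
  have hp := h1.prod h2
  rw [fourierMeasure_def l]
  have hfun : (fun t : ℝ × (Fin l → ℝ) => c - t) =
      Prod.map (fun p : ℝ => c.1 - p) (fun s : Fin l → ℝ => c.2 - s) := rfl
  rw [hfun]
  exact hp

lemma mp_sub_right {l : ℕ} {c : ℝ × (Fin l → ℝ)} (hc : c.2 ∈ intSet l) :
    MeasurePreserving (fun t => t - c) (fourierMeasure l) (fourierMeasure l) := by
  obtain ⟨m, hm⟩ := hc
  have h1 : MeasurePreserving (fun p : ℝ => p - c.1) volume volume :=
    measurePreserving_sub_right volume c.1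
  have hmeas : Measurable fun s : Fin l → ℝ => s - c.2 := measurable_id.sub measurable_const
  have h2 : MeasurePreserving (fun s : Fin l → ℝ => s - c.2) (nu l) (nu l) := by
    refine ⟨hmeas, ?_⟩
    rw [← hm] at hmeas ⊢
    exact map_nu_eq _ hmeas (Equiv.subRight m) fun q => by
      funext i; simp [Equiv.subRight]
  have hp := h1.prod h2
  rw [fourierMeasure_def l]
  have hfun : (fun t : ℝ × (Fin l → ℝ) => t - c) =
      Prod.map (fun p : ℝ => p - c.1) (fun s : Fin l → ℝ => s - c.2) := rfl
  rw [hfun]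
  exact hp

end MoyalAux

open MoyalAux

/-- Moyal bracket estimate in weighted Fourier norms:
`‖{ℱ,𝒢}_M‖†_{ρ-d-d₁} ≤ (1/(e² d₁ (d+d₁))) ‖ℱ‖†_ρ ‖𝒢‖†_{ρ-d}`. -/
theorem moyal_bracket_norm_bound (l : ℕ) (hl : 1 ≤ l)
    (ω : Fin l → ℝ) (hω : (∑ i, |ω i|) ≤ 1)
    (ℏ : ℝ) (hℏ : ℏ ∈ Set.Ioc (0 : ℝ) 1)
    (ρ d d₁ : ℝ) (hd : 0 < d) (hd₁ : 0 < d₁) (hρ : d + d₁ < ρ)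
    (F G : ℝ × (Fin l → ℝ) → ℂ)
    (hF : Integrable (fun t => ‖F t‖ * Real.exp (ρ * tAbs l t)) (fourierMeasure l))
    (hG : Integrable (fun t => ‖G t‖ * Real.exp ((ρ - d) * tAbs l t)) (fourierMeasure l)) :
    wNorm l (ρ - d - d₁) (moyalData l ω ℏ F G) ≤
      (1 / (Real.exp 1 ^ 2 * d₁ * (d + d₁))) * wNorm l ρ F * wNorm l (ρ - d) G := by
  obtain ⟨hℏ0, hℏ1⟩ := hℏ
  have hσpos : 0 < ρ - d - d₁ := by linarith
  have hC₀pos : 0 < 1 / (Real.exp 1 ^ 2 * d₁ * (d + d₁)) := by positivity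
  set μ := fourierMeasure l with hμdef
  -- a.e. measurable ENNReal versions of the norms of F and G
  have hFa : AEMeasurable (fun t => ENNReal.ofReal ‖F t‖) μ := by
    have h2 : AEMeasurable
        (fun t => (‖F t‖ * Real.exp (ρ * tAbs l t)) * Real.exp (-(ρ * tAbs l t))) μ :=
      hF.1.aemeasurable.mul
        ((Real.continuous_exp.comp
          ((continuous_const.mul (continuous_tAbs l)).neg)).measurable.aemeasurable)
    have h3 : (fun t => (‖F t‖ * Real.exp (ρ * tAbs l t)) * Real.exp (-(ρ * tAbs l t))) =
        fun t => ‖F t‖ := by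
      funext t; rw [mul_assoc, ← Real.exp_add, add_neg_cancel, Real.exp_zero, mul_one]
    exact ENNReal.measurable_ofReal.comp_aemeasurable (h3 ▸ h2)
  have hGa : AEMeasurable (fun t => ENNReal.ofReal ‖G t‖) μ := by
    have h2 : AEMeasurable
        (fun t => (‖G t‖ * Real.exp ((ρ - d) * tAbs l t)) *
          Real.exp (-((ρ - d) * tAbs l t))) μ :=
      hG.1.aemeasurable.mul
        ((Real.continuous_exp.comp
          ((continuous_const.mul (continuous_tAbs l)).neg)).measurable.aemeasurable)
    have h3 : (fun t => (‖G t‖ * Real.exp ((ρ - d) * tAbs l t)) *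
        Real.exp (-((ρ - d) * tAbs l t))) = fun t => ‖G t‖ := by
      funext t; rw [mul_assoc, ← Real.exp_add, add_neg_cancel, Real.exp_zero, mul_one]
    exact ENNReal.measurable_ofReal.comp_aemeasurable (h3 ▸ h2)
  set φ₀ := hFa.mk _ with hφ₀def
  set ψ₀ := hGa.mk _ with hψ₀def
  have hφ₀meas : Measurable φ₀ := hFa.measurable_mk
  have hψ₀meas : Measurable ψ₀ := hGa.measurable_mk
  -- weight functions
  set Φ : ℝ × (Fin l → ℝ) → ℝ≥0∞ :=
    fun t => φ₀ t * ENNReal.ofReal (Real.exp (ρ * tAbs l t)) with hΦdef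
  set Ψ : ℝ × (Fin l → ℝ) → ℝ≥0∞ :=
    fun t => ψ₀ t * ENNReal.ofReal (Real.exp ((ρ - d) * tAbs l t)) with hΨdef
  have hΦmeas : Measurable Φ :=
    hφ₀meas.mul (ENNReal.measurable_ofReal.comp
      (Real.continuous_exp.comp (continuous_const.mul (continuous_tAbs l))).measurable)
  have hΨmeas : Measurable Ψ :=
    hψ₀meas.mul (ENNReal.measurable_ofReal.comp
      (Real.continuous_exp.comp (continuous_const.mul (continuous_tAbs l))).measurable)
  set Φ' : ℝ × (Fin l → ℝ) → ℝ≥0∞ :=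
    fun t => ENNReal.ofReal ‖F t‖ * ENNReal.ofReal (Real.exp (ρ * tAbs l t)) with hΦ'def
  set Ψ' : ℝ × (Fin l → ℝ) → ℝ≥0∞ :=
    fun t => ENNReal.ofReal ‖G t‖ * ENNReal.ofReal (Real.exp ((ρ - d) * tAbs l t)) with hΨ'def
  have hΦae : Φ' =ᵐ[μ] Φ := by
    filter_upwards [hFa.ae_eq_mk] with t ht
    rw [hΦ'def, hΦdef]; simp only; rw [ht]
  have hΨae : Ψ' =ᵐ[μ] Ψ := by
    filter_upwards [hGa.ae_eq_mk] with t ht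
    rw [hΨ'def, hΨdef]; simp only; rw [ht]
  -- identification of the lintegrals of the weights
  have hwFnn : 0 ≤ wNorm l ρ F :=
    integral_nonneg fun t => mul_nonneg (norm_nonneg _) (Real.exp_pos _).le
  have hwGnn : 0 ≤ wNorm l (ρ - d) G :=
    integral_nonneg fun t => mul_nonneg (norm_nonneg _) (Real.exp_pos _).le
  have hLF : ∫⁻ t, Φ t ∂μ = ENNReal.ofReal (wNorm l ρ F) := by
    rw [← lintegral_congr_ae hΦae]
    have h1 : ∀ t, Φ' t = ENNReal.ofReal (‖F t‖ * Real.exp (ρ * tAbs l t)) := fun t =>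
      (ENNReal.ofReal_mul (norm_nonneg _)).symm
    rw [lintegral_congr h1,
      ← ofReal_integral_eq_lintegral_ofReal hF
        (Filter.Eventually.of_forall fun t => mul_nonneg (norm_nonneg _) (Real.exp_pos _).le)]
    rfl
  have hLG : ∫⁻ t, Ψ t ∂μ = ENNReal.ofReal (wNorm l (ρ - d) G) := by
    rw [← lintegral_congr_ae hΨae]
    have h1 : ∀ t, Ψ' t = ENNReal.ofReal (‖G t‖ * Real.exp ((ρ - d) * tAbs l t)) := fun t =>
      (ENNReal.ofReal_mul (norm_nonneg _)).symm
    rw [lintegral_congr h1,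
      ← ofReal_integral_eq_lintegral_ofReal hG
        (Filter.Eventually.of_forall fun t => mul_nonneg (norm_nonneg _) (Real.exp_pos _).le)]
    rfl
  have hLFfin : ∫⁻ t, Φ t ∂μ ≠ ⊤ := by rw [hLF]; exact ENNReal.ofReal_ne_top
  have hLGfin : ∫⁻ t, Ψ t ∂μ ≠ ⊤ := by rw [hLG]; exact ENNReal.ofReal_ne_top
  set c : ℝ≥0∞ := ENNReal.ofReal (1 / (Real.exp 1 ^ 2 * d₁ * (d + d₁))) with hcdef
  -- the integrand of the weighted norm of the Moyal data
  set g : ℝ × (Fin l → ℝ) → ℝ :=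
    fun t => ‖moyalData l ω ℏ F G t‖ * Real.exp ((ρ - d - d₁) * tAbs l t) with hgdef
  have hgnn : ∀ t, 0 ≤ g t := fun t => mul_nonneg (norm_nonneg _) (Real.exp_pos _).le
  -- Step 1: pass to a lintegral
  have step1 : wNorm l (ρ - d - d₁) (moyalData l ω ℏ F G) ≤
      (∫⁻ t, ENNReal.ofReal (g t) ∂μ).toReal := by
    have h1 : wNorm l (ρ - d - d₁) (moyalData l ω ℏ F G) = ∫ t, g t ∂μ := rfl
    rw [h1]
    calc ∫ t, g t ∂μ ≤ |∫ t, g t ∂μ| := le_abs_self _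
      _ = ‖∫ t, g t ∂μ‖ := (Real.norm_eq_abs _).symm
      _ ≤ (∫⁻ t, ENNReal.ofReal ‖g t‖ ∂μ).toReal := norm_integral_le_lintegral_norm g
      _ = (∫⁻ t, ENNReal.ofReal (g t) ∂μ).toReal := by
          congr 1
          exact lintegral_congr fun t => by rw [Real.norm_eq_abs, abs_of_nonneg (hgnn t)]
  -- Step 2: a.e. pointwise bound by a double lintegral
  have step2 : ∀ᵐ t ∂μ, ENNReal.ofReal (g t) ≤ ∫⁻ t', c * Φ (t' - t) * Ψ t' ∂μ := by
    filter_upwards [ae_snd_int l] with t ht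
    set inner : ℝ × (Fin l → ℝ) → ℂ :=
      fun t' => F (t' - t) * G t' *
        ((Real.sin (ℏ * OmegaPair l ω (t' - t) t' / 2) : ℝ) : ℂ) with hinnerdef
    have hCt : ‖moyalData l ω ℏ F G t‖ = (1 / ℏ) * ‖∫ t', inner t' ∂μ‖ := by
      rw [moyalData, norm_smul, Real.norm_eq_abs, abs_of_pos (by positivity)]
    have hI : ‖∫ t', inner t' ∂μ‖ ≤ (∫⁻ t', ENNReal.ofReal ‖inner t'‖ ∂μ).toReal :=
      norm_integral_le_lintegral_norm inner
    set K := ∫⁻ t', ENNReal.ofReal ‖inner t'‖ ∂μ with hKdef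
    have hEnn : (0:ℝ) ≤ 1 / ℏ * Real.exp ((ρ - d - d₁) * tAbs l t) := by positivity
    -- pointwise bound on the inner integrand
    have hpt : ∀ t', ENNReal.ofReal (1 / ℏ * Real.exp ((ρ - d - d₁) * tAbs l t)) *
        ENNReal.ofReal ‖inner t'‖ ≤ c * Φ' (t' - t) * Ψ' t' := by
      intro t'
      have hnorm : ‖inner t'‖ = ‖F (t' - t)‖ * ‖G t'‖ *
          |Real.sin (ℏ * OmegaPair l ω (t' - t) t' / 2)| := by
        rw [hinnerdef]; simp only
        rw [norm_mul, norm_mul, Complex.norm_real, Real.norm_eq_abs]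
      have hE : Real.exp ((ρ - d - d₁) * tAbs l t) ≤
          Real.exp ((ρ - d - d₁) * (tAbs l (t' - t) + tAbs l t')) :=
        Real.exp_le_exp.2 (mul_le_mul_of_nonneg_left (tAbs_triangle l t t') hσpos.le)
      have hkey := key_real_ineq hω hℏ0 (ρ := ρ) hd hd₁ (t' - t) t'
      have hreal : 1 / ℏ * Real.exp ((ρ - d - d₁) * tAbs l t) * ‖inner t'‖ ≤
          1 / (Real.exp 1 ^ 2 * d₁ * (d + d₁)) *
            (‖F (t' - t)‖ * Real.exp (ρ * tAbs l (t' - t))) *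
            (‖G t'‖ * Real.exp ((ρ - d) * tAbs l t')) := by
        rw [hnorm]
        have hFGnn : (0:ℝ) ≤ ‖F (t' - t)‖ * ‖G t'‖ :=
          mul_nonneg (norm_nonneg _) (norm_nonneg _)
        calc 1 / ℏ * Real.exp ((ρ - d - d₁) * tAbs l t) *
              (‖F (t' - t)‖ * ‖G t'‖ * |Real.sin (ℏ * OmegaPair l ω (t' - t) t' / 2)|)
            = (‖F (t' - t)‖ * ‖G t'‖) *
              (1 / ℏ * Real.exp ((ρ - d - d₁) * tAbs l t) *
                |Real.sin (ℏ * OmegaPair l ω (t' - t) t' / 2)|) := by ring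
          _ ≤ (‖F (t' - t)‖ * ‖G t'‖) *
              (1 / ℏ * Real.exp ((ρ - d - d₁) * (tAbs l (t' - t) + tAbs l t')) *
                |Real.sin (ℏ * OmegaPair l ω (t' - t) t' / 2)|) := by
              refine mul_le_mul_of_nonneg_left ?_ hFGnn
              refine mul_le_mul_of_nonneg_right ?_ (abs_nonneg _)
              exact mul_le_mul_of_nonneg_left hE (by positivity)
          _ ≤ (‖F (t' - t)‖ * ‖G t'‖) *
              (1 / (Real.exp 1 ^ 2 * d₁ * (d + d₁)) * Real.exp (ρ * tAbs l (t' - t)) *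
                Real.exp ((ρ - d) * tAbs l t')) :=
              mul_le_mul_of_nonneg_left hkey hFGnn
          _ = 1 / (Real.exp 1 ^ 2 * d₁ * (d + d₁)) *
              (‖F (t' - t)‖ * Real.exp (ρ * tAbs l (t' - t))) *
              (‖G t'‖ * Real.exp ((ρ - d) * tAbs l t')) := by ring
      calc ENNReal.ofReal (1 / ℏ * Real.exp ((ρ - d - d₁) * tAbs l t)) *
            ENNReal.ofReal ‖inner t'‖
          = ENNReal.ofReal (1 / ℏ * Real.exp ((ρ - d - d₁) * tAbs l t) * ‖inner t'‖) := by
            rw [← ENNReal.ofReal_mul hEnn]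
        _ ≤ ENNReal.ofReal (1 / (Real.exp 1 ^ 2 * d₁ * (d + d₁)) *
              (‖F (t' - t)‖ * Real.exp (ρ * tAbs l (t' - t))) *
              (‖G t'‖ * Real.exp ((ρ - d) * tAbs l t'))) := ENNReal.ofReal_le_ofReal hreal
        _ = c * Φ' (t' - t) * Ψ' t' := by
            rw [ENNReal.ofReal_mul (by positivity),
              ENNReal.ofReal_mul hC₀pos.le,
              ENNReal.ofReal_mul (norm_nonneg _), ENNReal.ofReal_mul (norm_nonneg _)]
    -- a.e. replacement of F, G by their measurable versions in the inner integral
    have hsubr : MeasurePreserving (fun x => x - t) μ μ := mp_sub_right ht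
    have hcongr : (fun t' => c * Φ' (t' - t) * Ψ' t') =ᵐ[μ]
        (fun t' => c * Φ (t' - t) * Ψ t') := by
      have h1 : (fun a => ENNReal.ofReal ‖F a‖) ∘ (fun x => x - t) =ᵐ[μ]
          φ₀ ∘ (fun x => x - t) :=
        hsubr.quasiMeasurePreserving.ae_eq hFa.ae_eq_mk
      filter_upwards [h1, hGa.ae_eq_mk] with t' h1' h2'
      simp only [Function.comp] at h1'
      rw [hΦ'def, hΦdef, hΨ'def, hΨdef]; simp only
      rw [h1', h2']
    -- assemble
    calc ENNReal.ofReal (g t)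
        ≤ ENNReal.ofReal ((1 / ℏ * Real.exp ((ρ - d - d₁) * tAbs l t)) * K.toReal) := by
          refine ENNReal.ofReal_le_ofReal ?_
          have hgt : g t = (1 / ℏ * Real.exp ((ρ - d - d₁) * tAbs l t)) *
              ‖∫ t', inner t' ∂μ‖ := by
            rw [hgdef]; simp only; rw [hCt]; ring
          rw [hgt]
          exact mul_le_mul_of_nonneg_left hI hEnn
      _ = ENNReal.ofReal (1 / ℏ * Real.exp ((ρ - d - d₁) * tAbs l t)) *
            ENNReal.ofReal K.toReal := ENNReal.ofReal_mul hEnn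
      _ ≤ ENNReal.ofReal (1 / ℏ * Real.exp ((ρ - d - d₁) * tAbs l t)) * K :=
          mul_le_mul_right ENNReal.ofReal_toReal_le _
      _ = ∫⁻ t', ENNReal.ofReal (1 / ℏ * Real.exp ((ρ - d - d₁) * tAbs l t)) *
            ENNReal.ofReal ‖inner t'‖ ∂μ :=
          (lintegral_const_mul' _ _ ENNReal.ofReal_ne_top).symm
      _ ≤ ∫⁻ t', c * Φ' (t' - t) * Ψ' t' ∂μ := lintegral_mono hpt
      _ = ∫⁻ t', c * Φ (t' - t) * Ψ t' ∂μ := lintegral_congr_ae hcongr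
  -- Step 3: Tonelli and translation invariance
  have hum : Measurable fun p : (ℝ × (Fin l → ℝ)) × (ℝ × (Fin l → ℝ)) =>
      c * Φ (p.2 - p.1) * Ψ p.2 :=
    ((measurable_const.mul (hΦmeas.comp (measurable_snd.sub measurable_fst))).mul
      (hΨmeas.comp measurable_snd))
  have step3 : ∫⁻ t, ∫⁻ t', c * Φ (t' - t) * Ψ t' ∂μ ∂μ =
      c * (∫⁻ t, Φ t ∂μ) * (∫⁻ t, Ψ t ∂μ) := by
    have hswap : ∫⁻ t, ∫⁻ t', c * Φ (t' - t) * Ψ t' ∂μ ∂μ =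
        ∫⁻ t', ∫⁻ t, c * Φ (t' - t) * Ψ t' ∂μ ∂μ :=
      lintegral_lintegral_swap hum.aemeasurable
    have hin : ∀ t' : ℝ × (Fin l → ℝ), ∫⁻ t, c * Φ (t' - t) * Ψ t' ∂μ =
        (c * Ψ t') * ∫⁻ t, Φ (t' - t) ∂μ := by
      intro t'
      have h1 : (fun t => c * Φ (t' - t) * Ψ t') =
          fun t => (c * Ψ t') * Φ (t' - t) := by
        funext t; ring
      rw [h1]
      exact lintegral_const_mul _ (hΦmeas.comp (measurable_const.sub measurable_id))
    have hin2 : ∀ᵐ t' ∂μ, ∫⁻ t, Φ (t' - t) ∂μ = ∫⁻ t, Φ t ∂μ := by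
      filter_upwards [ae_snd_int l] with t' ht'
      exact (mp_sub_left ht').lintegral_comp hΦmeas
    rw [hswap]
    have h2 : ∫⁻ t', ∫⁻ t, c * Φ (t' - t) * Ψ t' ∂μ ∂μ =
        ∫⁻ t', (c * ∫⁻ s, Φ s ∂μ) * Ψ t' ∂μ := by
      refine lintegral_congr_ae ?_
      filter_upwards [hin2] with t' h
      rw [hin t', h]; ring
    rw [h2, lintegral_const_mul _ hΨmeas]
  -- conclude
  have hfin : c * (∫⁻ t, Φ t ∂μ) * (∫⁻ t, Ψ t ∂μ) ≠ ⊤ :=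
    ENNReal.mul_ne_top (ENNReal.mul_ne_top ENNReal.ofReal_ne_top hLFfin) hLGfin
  have hle : (∫⁻ t, ENNReal.ofReal (g t) ∂μ) ≤ c * (∫⁻ t, Φ t ∂μ) * (∫⁻ t, Ψ t ∂μ) := by
    calc (∫⁻ t, ENNReal.ofReal (g t) ∂μ) ≤ ∫⁻ t, ∫⁻ t', c * Φ (t' - t) * Ψ t' ∂μ ∂μ :=
          lintegral_mono_ae step2
      _ = c * (∫⁻ t, Φ t ∂μ) * (∫⁻ t, Ψ t ∂μ) := step3
  calc wNorm l (ρ - d - d₁) (moyalData l ω ℏ F G)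
      ≤ (∫⁻ t, ENNReal.ofReal (g t) ∂μ).toReal := step1
    _ ≤ (c * (∫⁻ t, Φ t ∂μ) * (∫⁻ t, Ψ t ∂μ)).toReal := ENNReal.toReal_mono hfin hle
    _ = (1 / (Real.exp 1 ^ 2 * d₁ * (d + d₁))) * wNorm l ρ F * wNorm l (ρ - d) G := by
        rw [hLF, hLG, ENNReal.toReal_mul, ENNReal.toReal_mul, hcdef,
          ENNReal.toReal_ofReal hC₀pos.le, ENNReal.toReal_ofReal hwFnn,
          ENNReal.toReal_ofReal hwGnn]

end
end

section
/- Let μ > 1, v₀ > 0 and suppose a sequence (v_ℓ) of nonnegative reals satisfies v_{ℓ+1} ≤ Φ_ℓ v_ℓ² with Φ_ℓ ≤ ν (ℓ+1)^{6+4τ} for some 0 < ν ≤ 1 and τ > 1. Then for all ℓ, v_ℓ ≤ (e^{8(3+2τ)} v₀)^{2^ℓ}. In particular, if |ε| e^{24(3+2τ)} v₀ < 1, then ε^{2^ℓ} v_ℓ ≤ (ε μ³ v₀)^{2^ℓ} → 0 super-exponentially as ℓ → ∞, where μ = e^{8(3+2τ)}. -/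
open Filter Real

/-- Auxiliary sequence `B 0 = 0`, `B (n+1) = 2 B n + n`. -/
def kamB : ℕ → ℕ
  | 0 => 0
  | n + 1 => 2 * kamB n + n

lemma kamB_le : ∀ n, kamB n + n + 1 ≤ 2 ^ n := by
  intro n
  induction n with
  | zero => simp [kamB]
  | succ n ih =>
      have : kamB (n + 1) = 2 * kamB n + n := rfl
      rw [this, pow_succ]
      omega

/-- Abstract quadratic (Newton/KAM) convergence estimate: if
`v_{ℓ+1} ≤ Φ_ℓ v_ℓ²` with `Φ_ℓ ≤ ν (ℓ+1)^{6+4τ}`, `0 < ν ≤ 1`, `τ > 1`, then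
`v_ℓ ≤ (e^{8(3+2τ)} v₀)^{2^ℓ}`; moreover if `|ε| e^{24(3+2τ)} v₀ < 1` then
`ε^{2^ℓ} v_ℓ ≤ (ε e^{24(3+2τ)} v₀)^{2^ℓ} → 0`. -/
theorem kam_quadratic_convergence (τ ν : ℝ) (hτ : 1 < τ) (hν0 : 0 < ν) (hν1 : ν ≤ 1)
    (v Φ : ℕ → ℝ) (hv : ∀ ℓ, 0 ≤ v ℓ) (hv0 : 0 < v 0)
    (hΦ : ∀ ℓ, Φ ℓ ≤ ν * ((ℓ : ℝ) + 1) ^ (6 + 4 * τ))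
    (hrec : ∀ ℓ, v (ℓ + 1) ≤ Φ ℓ * (v ℓ) ^ 2) :
    (∀ ℓ, v ℓ ≤ (Real.exp (8 * (3 + 2 * τ)) * v 0) ^ (2 ^ ℓ)) ∧
    (∀ ε : ℝ, |ε| * Real.exp (24 * (3 + 2 * τ)) * v 0 < 1 →
      (∀ ℓ, |ε| ^ (2 ^ ℓ) * v ℓ ≤ (|ε| * Real.exp (24 * (3 + 2 * τ)) * v 0) ^ (2 ^ ℓ)) ∧
      Tendsto (fun ℓ => |ε| ^ (2 ^ ℓ) * v ℓ) atTop (nhds 0)) := by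
  have hc : (0:ℝ) < 6 + 4 * τ := by linarith
  -- key inductive bound
  have key : ∀ ℓ, v ℓ ≤ v 0 ^ (2 ^ ℓ) * Real.exp ((6 + 4 * τ) * (kamB ℓ : ℝ)) := by
    intro ℓ
    induction ℓ with
    | zero => simp [kamB]
    | succ ℓ ih =>
        have hb : (0:ℝ) ≤ v 0 ^ (2 ^ ℓ) * Real.exp ((6 + 4 * τ) * (kamB ℓ : ℝ)) :=
          mul_nonneg (pow_nonneg hv0.le _) (Real.exp_pos _).le
        have h1 : v (ℓ + 1) ≤ ν * ((ℓ : ℝ) + 1) ^ (6 + 4 * τ) * (v ℓ) ^ 2 :=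
          (hrec ℓ).trans (mul_le_mul_of_nonneg_right (hΦ ℓ) (sq_nonneg _))
        have h2 : ν * ((ℓ : ℝ) + 1) ^ (6 + 4 * τ) ≤ Real.exp ((6 + 4 * τ) * (ℓ : ℝ)) := by
          have hl1 : (0:ℝ) < (ℓ : ℝ) + 1 := by positivity
          have hlog : Real.log ((ℓ : ℝ) + 1) ≤ (ℓ : ℝ) := by
            have := Real.log_le_sub_one_of_pos hl1
            linarith
          have : ((ℓ : ℝ) + 1) ^ (6 + 4 * τ) =
              Real.exp ((6 + 4 * τ) * Real.log ((ℓ : ℝ) + 1)) := by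
            rw [Real.rpow_def_of_pos hl1, mul_comm]
          rw [this]
          calc ν * Real.exp ((6 + 4 * τ) * Real.log ((ℓ : ℝ) + 1))
              ≤ 1 * Real.exp ((6 + 4 * τ) * Real.log ((ℓ : ℝ) + 1)) :=
                mul_le_mul_of_nonneg_right hν1 (Real.exp_pos _).le
            _ = Real.exp ((6 + 4 * τ) * Real.log ((ℓ : ℝ) + 1)) := one_mul _
            _ ≤ Real.exp ((6 + 4 * τ) * (ℓ : ℝ)) := by
                apply Real.exp_le_exp.2
                exact mul_le_mul_of_nonneg_left hlog hc.le
        have h3 : (v ℓ) ^ 2 ≤ (v 0 ^ (2 ^ ℓ) * Real.exp ((6 + 4 * τ) * (kamB ℓ : ℝ))) ^ 2 :=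
          pow_le_pow_left₀ (hv ℓ) ih 2
        have h4 : v (ℓ + 1) ≤ Real.exp ((6 + 4 * τ) * (ℓ : ℝ)) *
            (v 0 ^ (2 ^ ℓ) * Real.exp ((6 + 4 * τ) * (kamB ℓ : ℝ))) ^ 2 := by
          calc v (ℓ + 1) ≤ ν * ((ℓ : ℝ) + 1) ^ (6 + 4 * τ) * (v ℓ) ^ 2 := h1
            _ ≤ Real.exp ((6 + 4 * τ) * (ℓ : ℝ)) *
                (v 0 ^ (2 ^ ℓ) * Real.exp ((6 + 4 * τ) * (kamB ℓ : ℝ))) ^ 2 := by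
                apply mul_le_mul h2 h3 (sq_nonneg _) (Real.exp_pos _).le
        refine h4.trans (le_of_eq ?_)
        have hBsucc : (kamB (ℓ + 1) : ℝ) = 2 * (kamB ℓ : ℝ) + (ℓ : ℝ) := by
          have : kamB (ℓ + 1) = 2 * kamB ℓ + ℓ := rfl
          rw [this]; push_cast; ring
        have e2 : Real.exp ((6 + 4 * τ) * (ℓ : ℝ)) *
            (Real.exp ((6 + 4 * τ) * (kamB ℓ : ℝ))) ^ 2 =
            Real.exp ((6 + 4 * τ) * (kamB (ℓ + 1) : ℝ)) := by
          rw [sq, ← Real.exp_add, ← Real.exp_add]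
          congr 1
          rw [hBsucc]; ring
        rw [mul_pow, ← pow_mul, ← pow_succ, ← e2]
        ring
  have hμpos : (0:ℝ) < Real.exp (8 * (3 + 2 * τ)) := Real.exp_pos _
  have main : ∀ ℓ, v ℓ ≤ (Real.exp (8 * (3 + 2 * τ)) * v 0) ^ (2 ^ ℓ) := by
    intro ℓ
    refine (key ℓ).trans ?_
    rw [mul_pow, mul_comm (Real.exp (8 * (3 + 2 * τ)) ^ (2 ^ ℓ))]
    apply mul_le_mul_of_nonneg_left _ (pow_nonneg hv0.le _)
    rw [← Real.exp_nat_mul]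
    apply Real.exp_le_exp.2
    have hB : (kamB ℓ : ℝ) ≤ (2 ^ ℓ : ℕ) := by
      have h := kamB_le ℓ
      exact_mod_cast (by omega : kamB ℓ ≤ 2 ^ ℓ)
    calc (6 + 4 * τ) * (kamB ℓ : ℝ) ≤ (6 + 4 * τ) * (2 ^ ℓ : ℕ) :=
          mul_le_mul_of_nonneg_left hB hc.le
      _ ≤ ((2 ^ ℓ : ℕ) : ℝ) * (8 * (3 + 2 * τ)) := by
          have : (0:ℝ) ≤ ((2 ^ ℓ : ℕ) : ℝ) := by positivity
          nlinarith
  refine ⟨main, fun ε hε => ?_⟩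
  have hμ3 : Real.exp (24 * (3 + 2 * τ)) = Real.exp (8 * (3 + 2 * τ)) ^ 3 := by
    rw [← Real.exp_nat_mul]; norm_num; ring_nf
  have hμ1 : (1:ℝ) ≤ Real.exp (8 * (3 + 2 * τ)) :=
    Real.one_le_exp (by nlinarith)
  have hbound : ∀ ℓ, |ε| ^ (2 ^ ℓ) * v ℓ ≤
      (|ε| * Real.exp (24 * (3 + 2 * τ)) * v 0) ^ (2 ^ ℓ) := by
    intro ℓ
    calc |ε| ^ (2 ^ ℓ) * v ℓ
        ≤ |ε| ^ (2 ^ ℓ) * (Real.exp (8 * (3 + 2 * τ)) * v 0) ^ (2 ^ ℓ) :=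
          mul_le_mul_of_nonneg_left (main ℓ) (pow_nonneg (abs_nonneg _) _)
      _ = (|ε| * (Real.exp (8 * (3 + 2 * τ)) * v 0)) ^ (2 ^ ℓ) := (mul_pow _ _ _).symm
      _ ≤ (|ε| * Real.exp (24 * (3 + 2 * τ)) * v 0) ^ (2 ^ ℓ) := by
          apply pow_le_pow_left₀
          · positivity
          · rw [hμ3]
            have h1 : Real.exp (8 * (3 + 2 * τ)) ≤ Real.exp (8 * (3 + 2 * τ)) ^ 3 := by
              nlinarith [hμ1, hμpos.le, sq_nonneg (Real.exp (8 * (3 + 2 * τ)))]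
            calc |ε| * (Real.exp (8 * (3 + 2 * τ)) * v 0)
                ≤ |ε| * (Real.exp (8 * (3 + 2 * τ)) ^ 3 * v 0) := by
                  apply mul_le_mul_of_nonneg_left _ (abs_nonneg _)
                  exact mul_le_mul_of_nonneg_right h1 hv0.le
              _ = |ε| * Real.exp (8 * (3 + 2 * τ)) ^ 3 * v 0 := by ring
  refine ⟨hbound, ?_⟩
  set c := |ε| * Real.exp (24 * (3 + 2 * τ)) * v 0 with hcdef
  have hc0 : 0 ≤ c := by positivity
  have htend : Tendsto (fun ℓ : ℕ => c ^ (2 ^ ℓ)) atTop (nhds 0) := by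
    have h1 : Tendsto (fun n : ℕ => c ^ n) atTop (nhds 0) :=
      tendsto_pow_atTop_nhds_zero_of_lt_one hc0 hε
    have h2 : Tendsto (fun ℓ : ℕ => 2 ^ ℓ) atTop atTop :=
      tendsto_pow_atTop_atTop_of_one_lt one_lt_two
    exact h1.comp h2
  apply squeeze_zero (fun ℓ => mul_nonneg (pow_nonneg (abs_nonneg _) _) (hv ℓ)) hbound htend
end
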